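/- arXiv:2309.00687 — 2 statements merged into one kernel-verified Lean document; each statement's English description precedes it below -/
import Mathlib

section
/- For a linear code C ≤ (F_{q^m})^n, the following are equivalent: (i) dim_{F_q}(tr(C)) = m·dim_{F_{q^m}}(C); (ii) every F_{q^m}-linear subspace D of C satisfies dim_{F_q}(tr(D)) = m·dim_{F_{q^m}}(D); (iii) for every nonzero x in C, tr(x) ≠ 0; (iv) C ∩ K = {0}, where K is the kernel of the coordinatewise trace map (F_{q^m})^n -> (F_q)^n. -/
open Module

/-- The coordinatewise trace map `(F_{q^m})^n → (F_q)^n`. -/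
noncomputable def trVec (Fq K : Type) [Field Fq] [Field K] [Algebra Fq K] (n : ℕ) :
    (Fin n → K) →ₗ[Fq] (Fin n → Fq) :=
  LinearMap.pi fun i => (Algebra.trace Fq K).comp (LinearMap.proj i)

/-- The trace code `tr(C)` of an `F_{q^m}`-linear code `C`. -/
noncomputable def traceCode (Fq K : Type) [Field Fq] [Field K] [Algebra Fq K] {n : ℕ}
    (C : Submodule K (Fin n → K)) : Submodule Fq (Fin n → Fq) :=
  (C.restrictScalars Fq).map (trVec Fq K n)

lemma aux_key (m n : ℕ) (Fq K : Type) [Field Fq] [Field K] [Algebra Fq K]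
    [FiniteDimensional Fq K] (hfr : Module.finrank Fq K = m)
    (D : Submodule K (Fin n → K)) :
    Module.finrank Fq (traceCode Fq K D) = m * Module.finrank K D ↔
      D.restrictScalars Fq ⊓ LinearMap.ker (trVec Fq K n) = ⊥ := by
  have hFD : FiniteDimensional Fq (Fin n → K) := by infer_instance
  set f := (trVec Fq K n).comp (D.restrictScalars Fq).subtype with hf
  have hrange : LinearMap.range f = traceCode Fq K D := by
    rw [hf, LinearMap.range_comp, Submodule.range_subtype]; rfl
  have hker : LinearMap.ker f = Submodule.comap (D.restrictScalars Fq).subtype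
      (LinearMap.ker (trVec Fq K n)) := by
    rw [hf, LinearMap.ker_comp]
  have hrn := LinearMap.finrank_range_add_finrank_ker f
  have hdim : Module.finrank Fq (D.restrictScalars Fq) = m * Module.finrank K D := by
    rw [← hfr]
    exact (Module.finrank_mul_finrank Fq K D).symm
  rw [hrange, hdim] at hrn
  constructor
  · intro h
    rw [h] at hrn
    have : Module.finrank Fq (LinearMap.ker f) = 0 := by omega
    have hbot : LinearMap.ker f = ⊥ := Submodule.finrank_eq_zero.mp this
    rw [hker] at hbot
    exact disjoint_iff.mp (Submodule.disjoint_iff_comap_eq_bot.mpr hbot)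
  · intro h
    have hbot : LinearMap.ker f = ⊥ := by
      rw [hker]
      exact Submodule.disjoint_iff_comap_eq_bot.mp (disjoint_iff.mpr h)
    rw [hbot, finrank_bot] at hrn
    omega

theorem stmt_2 (q m n : ℕ) (hq : IsPrimePow q) (hm : 0 < m)
    (Fq K : Type) [Field Fq] [Field K] [Algebra Fq K] [Fintype Fq] [Fintype K]
    (hcq : Fintype.card Fq = q) (hcK : Fintype.card K = q ^ m)
    (hfr : Module.finrank Fq K = m)
    (C : Submodule K (Fin n → K)) :
    List.TFAE [
      Module.finrank Fq (traceCode Fq K C) = m * Module.finrank K C,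
      ∀ D : Submodule K (Fin n → K), D ≤ C →
        Module.finrank Fq (traceCode Fq K D) = m * Module.finrank K D,
      ∀ x ∈ C, x ≠ (0 : Fin n → K) → trVec Fq K n x ≠ 0,
      C.restrictScalars Fq ⊓ LinearMap.ker (trVec Fq K n) = ⊥ ] := by
  have hFD : FiniteDimensional Fq K := Module.Finite.of_finite
  tfae_have 1 → 4 := fun h => (aux_key m n Fq K hfr C).mp h
  tfae_have 4 → 2 := by
    intro h D hD
    apply (aux_key m n Fq K hfr D).mpr
    rw [← le_bot_iff, ← h]
    exact inf_le_inf_right _ (fun x hx => hD hx)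
  tfae_have 2 → 1 := fun h => h C le_rfl
  tfae_have 4 → 3 := by
    intro h x hx hx0 htr
    exact hx0 ((Submodule.eq_bot_iff _).mp h x ⟨hx, htr⟩)
  tfae_have 3 → 4 := by
    intro h
    rw [Submodule.eq_bot_iff]
    intro x ⟨hx, hk⟩
    by_contra hx0
    exact h x hx hx0 hk
  tfae_finish
end

section
/- Delsarte's theorem: For any F_{q^m}-linear code C ≤ (F_{q^m})^n, the dual (over F_q) of the trace code equals the subfield subcode of the dual: (tr(C))^⊥ = (C^⊥) ∩ (F_q)^n. -/
open Module

/-- The dual code with respect to the standard bilinear form `∑ i, x i * y i`. -/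
def dualCode (R : Type) [CommRing R] (n : ℕ) (C : Submodule R (Fin n → R)) :
    Submodule R (Fin n → R) where
  carrier := {y | ∀ x ∈ C, ∑ i, x i * y i = 0}
  add_mem' := by
    intro a b ha hb x hx
    simp only [Set.mem_setOf_eq] at ha hb
    simp [Pi.add_apply, mul_add, Finset.sum_add_distrib, ha x hx, hb x hx]
  zero_mem' := by intro x hx; simp
  smul_mem' := by
    intro c y hy x hx
    simp only [Set.mem_setOf_eq] at hy
    have h := hy x hx
    calc ∑ i, x i * (c • y) i = ∑ i, c * (x i * y i) := by
          refine Finset.sum_congr rfl fun i _ => ?_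
          simp [smul_eq_mul]; ring
      _ = c * ∑ i, x i * y i := by rw [Finset.mul_sum]
      _ = 0 := by rw [h, mul_zero]

/-- The coordinatewise embedding `(F_q)^n → (F_{q^m})^n`. -/
def algVec (Fq K : Type) [Field Fq] [Field K] [Algebra Fq K] (n : ℕ) :
    (Fin n → Fq) →ₗ[Fq] (Fin n → K) :=
  LinearMap.pi fun i => (Algebra.linearMap Fq K).comp (LinearMap.proj i)

lemma mem_dualCode {R : Type} [CommRing R] {n : ℕ} {C : Submodule R (Fin n → R)}
    {y : Fin n → R} : y ∈ dualCode R n C ↔ ∀ x ∈ C, ∑ i, x i * y i = 0 := Iff.rfl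

lemma key_trace (Fq K : Type) [Field Fq] [Field K] [Algebra Fq K] {n : ℕ}
    (c : Fin n → K) (y : Fin n → Fq) :
    ∑ i, (trVec Fq K n c) i * y i
      = Algebra.trace Fq K (∑ i, c i * algVec Fq K n y i) := by
  rw [map_sum]
  refine Finset.sum_congr rfl fun i _ => ?_
  have h : c i * algVec Fq K n y i = y i • c i := by
    simp [algVec, Algebra.smul_def, mul_comm]
  rw [h, map_smul]
  simp [trVec, smul_eq_mul, mul_comm]

/-- Delsarte's theorem: `(tr C)^⊥ = (C^⊥)|_{F_q}`. -/
theorem stmt_3 (q m n : ℕ) (hq : IsPrimePow q) (hm : 0 < m)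
    (Fq K : Type) [Field Fq] [Field K] [Algebra Fq K] [Fintype Fq] [Fintype K]
    (hcq : Fintype.card Fq = q) (hcK : Fintype.card K = q ^ m)
    (C : Submodule K (Fin n → K)) :
    dualCode Fq n (traceCode Fq K C) =
      Submodule.comap (algVec Fq K n) ((dualCode K n C).restrictScalars Fq) := by
  have : FiniteDimensional Fq K := Module.Finite.of_finite
  ext y
  rw [Submodule.mem_comap, Submodule.restrictScalars_mem, mem_dualCode, mem_dualCode]
  constructor
  · intro hy x hx
    by_contra hne
    obtain ⟨k, hk⟩ := not_forall.mp fun h =>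
      hne ((traceForm_nondegenerate Fq K).1 _ h)
    apply hk
    have hkx : k • x ∈ C := C.smul_mem k hx
    have h1 : trVec Fq K n (k • x) ∈ traceCode Fq K C :=
      Submodule.mem_map_of_mem (by simpa using hkx)
    have h2 := hy _ h1
    rw [key_trace] at h2
    have h3 : ∑ i, (k • x) i * algVec Fq K n y i
        = (∑ i, x i * algVec Fq K n y i) * k := by
      rw [Finset.sum_mul]
      refine Finset.sum_congr rfl fun i _ => ?_
      simp [smul_eq_mul]; ring
    rw [h3] at h2
    rw [Algebra.traceForm_apply]; exact h2
  · intro hy x hx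
    obtain ⟨c, hc, rfl⟩ := hx
    rw [key_trace, hy c hc, map_zero]
end
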